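/- In an abelian category, let 0 → A → D₁ → B → 0 and 0 → A → D₂ → B → 0 be two extensions, and suppose given compatible short exact sequences 0 → A' → A → A'' → 0, 0 → B' → B → B'' → 0, and 0 → D_i' → D_i → D_i'' → 0 (i = 1,2) fitting into 3×3 commutative diagrams with exact rows and columns in which D_i' is an extension of B' by A' and D_i'' is an extension of B'' by A''. If moreover each column splits in the underlying additive structure (e.g. the objects are free modules over a ring and the columns are split exact as module sequences), then the Baer sums fit into a short exact sequence 0 → (D₁' + D₂') → (D₁ + D₂) → (D₁'' + D₂'') → 0. -/

import Mathlib

open CategoryTheory CategoryTheory.Limits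

universe v u

attribute [local instance] CategoryTheory.Abelian.hasFiniteBiproducts

variable {C : Type u} [Category.{v} C] [Abelian C]

private lemma isZero_of_isLimit_kernelFork {X Y K : C} {f : X ⟶ Y} (hf : Mono f) {ι : K ⟶ X}
    {w : ι ≫ f = 0} (h : IsLimit (KernelFork.ofι ι w)) : IsZero K := by
  have hι : ι = 0 := by rw [← cancel_mono f, w, zero_comp]
  rw [IsZero.iff_id_eq_zero]
  apply Fork.IsLimit.hom_ext h
  simp [hι]

private lemma isIso_of_isCokernel {X Y Q₁ Q₂ : C} {f : X ⟶ Y} {p : Y ⟶ Q₁} {q : Y ⟶ Q₂}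
    {w₁ : f ≫ p = 0} {w₂ : f ≫ q = 0}
    (h₁ : IsColimit (CokernelCofork.ofπ p w₁)) (h₂ : IsColimit (CokernelCofork.ofπ q w₂))
    (t : Q₁ ⟶ Q₂) (ht : p ≫ t = q) : IsIso t := by
  have : t = (IsColimit.coconePointUniqueUpToIso h₁ h₂).hom := by
    apply Cofork.IsColimit.hom_ext h₁
    simp only [Cofork.π_ofπ]
    rw [ht]
    simpa using (IsColimit.comp_coconePointUniqueUpToIso_hom h₁ h₂ WalkingParallelPair.one).symm
  rw [this]
  infer_instance

private lemma nineLemmaMiddle {R₁ R₂ R₃ : ShortComplex C}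
    (h₁ : R₁.ShortExact) (h₂ : R₂.ShortExact) (h₃ : R₃.ShortExact)
    (φ : R₁ ⟶ R₂) (ψ : R₂ ⟶ R₃) (wφψ : φ ≫ ψ = 0)
    (hc₁ : (ShortComplex.mk φ.τ₁ ψ.τ₁
      (by rw [← ShortComplex.comp_τ₁, wφψ, ShortComplex.zero_τ₁])).ShortExact)
    (hc₃ : (ShortComplex.mk φ.τ₃ ψ.τ₃
      (by rw [← ShortComplex.comp_τ₃, wφψ, ShortComplex.zero_τ₃])).ShortExact)
    {w₂ : φ.τ₂ ≫ ψ.τ₂ = 0} :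
    (ShortComplex.mk φ.τ₂ ψ.τ₂ w₂).ShortExact := by
  haveI := h₁.mono_f
  haveI := h₁.epi_g
  haveI := h₂.mono_f
  haveI := h₂.epi_g
  haveI := hc₁.mono_f
  haveI := hc₃.mono_f
  let S : ShortComplex.SnakeInput C :=
    { L₀ := kernel φ
      L₁ := R₁
      L₂ := R₂
      L₃ := cokernel φ
      v₀₁ := kernel.ι φ
      v₁₂ := φ
      v₂₃ := cokernel.π φ
      w₀₂ := kernel.condition φ
      w₁₃ := cokernel.condition φ
      h₀ := kernelIsKernel φ
      h₃ := cokernelIsCokernel φ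
      L₁_exact := h₁.exact
      epi_L₁_g := h₁.epi_g
      L₂_exact := h₂.exact
      mono_L₂_f := h₂.mono_f }
  -- monomorphy of the middle vertical map
  have hz₁ : IsZero S.L₀.X₁ := isZero_of_isLimit_kernelFork hc₁.mono_f S.h₀τ₁
  have hz₃ : IsZero S.L₀.X₃ := isZero_of_isLimit_kernelFork hc₃.mono_f S.h₀τ₃
  have hz₂ : IsZero S.L₀.X₂ :=
    S.L₀_exact.isZero_X₂ (hz₁.eq_of_src _ _) (hz₃.eq_of_tgt _ _)
  have hmono : Mono φ.τ₂ := Preadditive.mono_of_isZero_kernel' _ S.h₀τ₂ hz₂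
  -- the cokernel row is short exact
  have hQmono : Mono S.L₃.f := S.L₂'_exact.mono_g (hz₃.eq_of_src _ _)
  have hQepi : Epi S.L₃.g := S.epi_L₃_g
  have hQ : S.L₃.ShortExact := ShortComplex.ShortExact.mk' S.L₃_exact hQmono hQepi
  -- the comparison map to `R₃`
  let ρ : S.L₃ ⟶ R₃ := cokernel.desc φ ψ wφψ
  have hπρ : cokernel.π φ ≫ ρ = ψ := cokernel.π_desc _ _ _
  haveI hρ₁ : IsIso ρ.τ₁ := isIso_of_isCokernel S.h₃τ₁ hc₁.gIsCokernel ρ.τ₁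
    (by simpa using congrArg ShortComplex.Hom.τ₁ hπρ)
  haveI hρ₃ : IsIso ρ.τ₃ := isIso_of_isCokernel S.h₃τ₃ hc₃.gIsCokernel ρ.τ₃
    (by simpa using congrArg ShortComplex.Hom.τ₃ hπρ)
  haveI hρ₂ : IsIso ρ.τ₂ := ShortComplex.isIso₂_of_shortExact_of_isIso₁₃ ρ hQ h₃
  have hψτ₂ : ψ.τ₂ = (cokernel.π φ).τ₂ ≫ ρ.τ₂ := by rw [← ShortComplex.comp_τ₂, hπρ]
  -- epimorphy of the middle vertical map
  haveI : Epi ((cokernel.π φ).τ₂) :=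
    (inferInstance : Epi ((ShortComplex.π₂ (C := C)).map (cokernel.π φ)))
  have hepi : Epi ψ.τ₂ := by rw [hψτ₂]; exact epi_comp _ _
  -- exactness in the middle
  have hex₀ : (ShortComplex.mk φ.τ₂ (cokernel.π φ).τ₂ S.w₁₃_τ₂).Exact :=
    ShortComplex.exact_of_g_is_cokernel _ S.h₃τ₂
  have hex : (ShortComplex.mk φ.τ₂ ψ.τ₂ w₂).Exact := by
    refine ShortComplex.exact_of_iso
      (S₁ := ShortComplex.mk φ.τ₂ (cokernel.π φ).τ₂ S.w₁₃_τ₂) ?_ hex₀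
    exact ShortComplex.isoMk (Iso.refl _) (Iso.refl _) (asIso ρ.τ₂) (by simp) (by simp [hψτ₂])
  exact ShortComplex.ShortExact.mk' hex hmono hepi

/-- The Baer sum of two extensions `0 → A → D₁ → B → 0` and `0 → A → D₂ → B → 0`:
push out the direct sum extension along the codiagonal `A ⊞ A → A` and pull back along
the diagonal `B → B ⊞ B`. -/
noncomputable def baer {A B D₁ D₂ : C} (i₁ : A ⟶ D₁) (p₁ : D₁ ⟶ B) (i₂ : A ⟶ D₂)
    (p₂ : D₂ ⟶ B) (w₁ : i₁ ≫ p₁ = 0) (w₂ : i₂ ≫ p₂ = 0) : C :=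
  pullback (biprod.lift (𝟙 B) (𝟙 B))
    (pushout.desc (0 : A ⟶ B ⊞ B) (biprod.map p₁ p₂) (by ext <;> simp [w₁, w₂]) :
      pushout (biprod.desc (𝟙 A) (𝟙 A)) (biprod.map i₁ i₂) ⟶ B ⊞ B)

/-- The canonical inclusion `A → D₁ + D₂` into a Baer sum. -/
noncomputable def baerι {A B D₁ D₂ : C} (i₁ : A ⟶ D₁) (p₁ : D₁ ⟶ B) (i₂ : A ⟶ D₂)
    (p₂ : D₂ ⟶ B) (w₁ : i₁ ≫ p₁ = 0) (w₂ : i₂ ≫ p₂ = 0) :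
    A ⟶ baer i₁ p₁ i₂ p₂ w₁ w₂ :=
  pullback.lift (0 : A ⟶ B)
    (pushout.inl (biprod.desc (𝟙 A) (𝟙 A)) (biprod.map i₁ i₂)) (by simp; exact (pushout.inl_desc _ _ _).symm)

/-- The canonical projection `D₁ + D₂ → B` from a Baer sum. -/
noncomputable def baerπ {A B D₁ D₂ : C} (i₁ : A ⟶ D₁) (p₁ : D₁ ⟶ B) (i₂ : A ⟶ D₂)
    (p₂ : D₂ ⟶ B) (w₁ : i₁ ≫ p₁ = 0) (w₂ : i₂ ≫ p₂ = 0) :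
    baer i₁ p₁ i₂ p₂ w₁ w₂ ⟶ B :=
  pullback.fst _ _

attribute [local simp] pullback.lift_fst pullback.lift_fst_assoc pullback.lift_snd pullback.lift_snd_assoc pushout.inl_desc pushout.inl_desc_assoc pushout.inr_desc pushout.inr_desc_assoc
private lemma baer_lift_fst {A B D₁ D₂ W : C} {i₁ : A ⟶ D₁} {p₁ : D₁ ⟶ B} {i₂ : A ⟶ D₂}
    {p₂ : D₂ ⟶ B} {w₁ : i₁ ≫ p₁ = 0} {w₂ : i₂ ≫ p₂ = 0} (h : W ⟶ B)
    (k : W ⟶ pushout (biprod.desc (𝟙 A) (𝟙 A)) (biprod.map i₁ i₂))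
    (w : h ≫ biprod.lift (𝟙 B) (𝟙 B) = k ≫ pushout.desc (0 : A ⟶ B ⊞ B) (biprod.map p₁ p₂)
      (by ext <;> simp [w₁, w₂])) :
    @CategoryStruct.comp C _ W (baer i₁ p₁ i₂ p₂ w₁ w₂) B (pullback.lift h k w)
      (pullback.fst _ _) = h :=
  pullback.lift_fst _ _ _

private lemma baer_lift_snd {A B D₁ D₂ W : C} {i₁ : A ⟶ D₁} {p₁ : D₁ ⟶ B} {i₂ : A ⟶ D₂}
    {p₂ : D₂ ⟶ B} {w₁ : i₁ ≫ p₁ = 0} {w₂ : i₂ ≫ p₂ = 0} (h : W ⟶ B)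
    (k : W ⟶ pushout (biprod.desc (𝟙 A) (𝟙 A)) (biprod.map i₁ i₂))
    (w : h ≫ biprod.lift (𝟙 B) (𝟙 B) = k ≫ pushout.desc (0 : A ⟶ B ⊞ B) (biprod.map p₁ p₂)
      (by ext <;> simp [w₁, w₂])) :
    @CategoryStruct.comp C _ W (baer i₁ p₁ i₂ p₂ w₁ w₂) _ (pullback.lift h k w)
      (pullback.snd _ _) = k :=
  pullback.lift_snd _ _ _

private lemma baer_lift_fst_assoc {A B D₁ D₂ W Z : C} {i₁ : A ⟶ D₁} {p₁ : D₁ ⟶ B} {i₂ : A ⟶ D₂}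
    {p₂ : D₂ ⟶ B} {w₁ : i₁ ≫ p₁ = 0} {w₂ : i₂ ≫ p₂ = 0} (h : W ⟶ B)
    (k : W ⟶ pushout (biprod.desc (𝟙 A) (𝟙 A)) (biprod.map i₁ i₂))
    (w : h ≫ biprod.lift (𝟙 B) (𝟙 B) = k ≫ pushout.desc (0 : A ⟶ B ⊞ B) (biprod.map p₁ p₂)
      (by ext <;> simp [w₁, w₂])) (z : B ⟶ Z) :
    @CategoryStruct.comp C _ W (baer i₁ p₁ i₂ p₂ w₁ w₂) Z (pullback.lift h k w)
      (@CategoryStruct.comp C _ (baer i₁ p₁ i₂ p₂ w₁ w₂) B Z (pullback.fst _ _) z) = h ≫ z :=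
  pullback.lift_fst_assoc _ _ _ _

private lemma baer_lift_snd_assoc {A B D₁ D₂ W Z : C} {i₁ : A ⟶ D₁} {p₁ : D₁ ⟶ B} {i₂ : A ⟶ D₂}
    {p₂ : D₂ ⟶ B} {w₁ : i₁ ≫ p₁ = 0} {w₂ : i₂ ≫ p₂ = 0} (h : W ⟶ B)
    (k : W ⟶ pushout (biprod.desc (𝟙 A) (𝟙 A)) (biprod.map i₁ i₂))
    (w : h ≫ biprod.lift (𝟙 B) (𝟙 B) = k ≫ pushout.desc (0 : A ⟶ B ⊞ B) (biprod.map p₁ p₂)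
      (by ext <;> simp [w₁, w₂]))
    (z : pushout (biprod.desc (𝟙 A) (𝟙 A)) (biprod.map i₁ i₂) ⟶ Z) :
    @CategoryStruct.comp C _ W (baer i₁ p₁ i₂ p₂ w₁ w₂) Z (pullback.lift h k w)
      (@CategoryStruct.comp C _ (baer i₁ p₁ i₂ p₂ w₁ w₂) _ Z (pullback.snd _ _) z) = k ≫ z :=
  pullback.lift_snd_assoc _ _ _ _

/-- The second projection from a Baer sum. -/
private noncomputable def baerSnd {A B D₁ D₂ : C} (i₁ : A ⟶ D₁) (p₁ : D₁ ⟶ B) (i₂ : A ⟶ D₂)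
    (p₂ : D₂ ⟶ B) (w₁ : i₁ ≫ p₁ = 0) (w₂ : i₂ ≫ p₂ = 0) :
    baer i₁ p₁ i₂ p₂ w₁ w₂ ⟶ pushout (biprod.desc (𝟙 A) (𝟙 A)) (biprod.map i₁ i₂) :=
  pullback.snd _ _

private lemma baer_hom_ext {A B D₁ D₂ W : C} {i₁ : A ⟶ D₁} {p₁ : D₁ ⟶ B} {i₂ : A ⟶ D₂}
    {p₂ : D₂ ⟶ B} {w₁ : i₁ ≫ p₁ = 0} {w₂ : i₂ ≫ p₂ = 0} {k l : W ⟶ baer i₁ p₁ i₂ p₂ w₁ w₂}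
    (h₀ : k ≫ baerπ i₁ p₁ i₂ p₂ w₁ w₂ = l ≫ baerπ i₁ p₁ i₂ p₂ w₁ w₂)
    (h₁ : k ≫ baerSnd i₁ p₁ i₂ p₂ w₁ w₂ = l ≫ baerSnd i₁ p₁ i₂ p₂ w₁ w₂) :
    k = l :=
  pullback.hom_ext h₀ h₁

attribute [local simp] baer_lift_fst baer_lift_snd baer_lift_fst_assoc baer_lift_snd_assoc

/-- The biproduct of two cokernels is a cokernel. -/
private noncomputable def biprodIsCokernel {A₁ A₂ D₁ D₂ B₁ B₂ : C}
    {i₁ : A₁ ⟶ D₁} {p₁ : D₁ ⟶ B₁} {i₂ : A₂ ⟶ D₂} {p₂ : D₂ ⟶ B₂}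
    {w₁ : i₁ ≫ p₁ = 0} {w₂ : i₂ ≫ p₂ = 0} [Epi p₁] [Epi p₂]
    (h₁ : IsColimit (CokernelCofork.ofπ p₁ w₁)) (h₂ : IsColimit (CokernelCofork.ofπ p₂ w₂)) :
    IsColimit (CokernelCofork.ofπ (biprod.map p₁ p₂)
      (show biprod.map i₁ i₂ ≫ biprod.map p₁ p₂ = 0 by ext <;> simp [w₁, w₂])) := by
  refine CokernelCofork.IsColimit.ofπ' _ _ (fun {T} h hh => ⟨biprod.desc
      (CokernelCofork.IsColimit.desc' h₁ (biprod.inl ≫ h)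
        (by rw [← Category.assoc]; simpa using biprod.inl ≫= hh)).1
      (CokernelCofork.IsColimit.desc' h₂ (biprod.inr ≫ h)
        (by rw [← Category.assoc]; simpa using biprod.inr ≫= hh)).1, ?_⟩)
  ext
  · simpa using (CokernelCofork.IsColimit.desc' h₁ (biprod.inl ≫ h) _).2
  · simpa using (CokernelCofork.IsColimit.desc' h₂ (biprod.inr ≫ h) _).2

/-- The quotient map out of a pushout is the cokernel of `pushout.inl`. -/
private noncomputable def pushoutIsCokernel {A' A D Q : C} (e : A' ⟶ A) (m : A' ⟶ D) (c : D ⟶ Q)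
    (wc : m ≫ c = 0) (hc : IsColimit (CokernelCofork.ofπ c wc)) [Epi c]
    (wq : e ≫ (0 : A ⟶ Q) = m ≫ c)
    (w : pushout.inl e m ≫ pushout.desc 0 c wq = 0) :
    IsColimit (CokernelCofork.ofπ (pushout.desc (0 : A ⟶ Q) c wq) w) := by
  haveI : Epi (pushout.desc (0 : A ⟶ Q) c wq) := by
    have : Epi (pushout.inr e m ≫ pushout.desc (0 : A ⟶ Q) c wq) := by
      rw [pushout.inr_desc]; infer_instance
    exact epi_of_epi (pushout.inr e m) _
  refine CokernelCofork.IsColimit.ofπ' _ _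
    (fun {T} h hh => ⟨(CokernelCofork.IsColimit.desc' hc (pushout.inr e m ≫ h)
      (by rw [← Category.assoc, ← pushout.condition, Category.assoc, hh, comp_zero])).1, ?_⟩)
  apply pushout.hom_ext
  · simp [hh]
  · simpa using (CokernelCofork.IsColimit.desc' hc (pushout.inr e m ≫ h) _).2

/-- The canonical map into a pullback is a kernel of the first projection. -/
private noncomputable def pullbackFstIsKernel {B Q P A : C} (f : B ⟶ Q) (g : P ⟶ Q) (k : A ⟶ P)
    (wk : k ≫ g = 0) (hk : IsLimit (KernelFork.ofι k wk)) [Mono k]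
    (wl : (0 : A ⟶ B) ≫ f = k ≫ g)
    (w : pullback.lift 0 k wl ≫ pullback.fst f g = 0) :
    IsLimit (KernelFork.ofι (pullback.lift (0 : A ⟶ B) k wl) w) := by
  haveI : Mono (pullback.lift (0 : A ⟶ B) k wl) := by
    have : Mono (pullback.lift (0 : A ⟶ B) k wl ≫ pullback.snd f g) := by
      rw [pullback.lift_snd]; infer_instance
    exact mono_of_mono _ (pullback.snd f g)
  refine KernelFork.IsLimit.ofι' _ _
    (fun {T} x hx => ⟨(KernelFork.IsLimit.lift' hk (x ≫ pullback.snd f g)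
      (by rw [Category.assoc, ← pullback.condition, ← Category.assoc, hx, zero_comp])).1, ?_⟩)
  apply pullback.hom_ext
  · simp [hx]
  · simpa using (KernelFork.IsLimit.lift' hk (x ≫ pullback.snd f g) _).2

private lemma baer_shortExact {A B D₁ D₂ : C} {i₁ : A ⟶ D₁} {p₁ : D₁ ⟶ B} {i₂ : A ⟶ D₂}
    {p₂ : D₂ ⟶ B} {w₁ : i₁ ≫ p₁ = 0} {w₂ : i₂ ≫ p₂ = 0}
    (h₁ : (ShortComplex.mk i₁ p₁ w₁).ShortExact) (h₂ : (ShortComplex.mk i₂ p₂ w₂).ShortExact)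
    {w : baerι i₁ p₁ i₂ p₂ w₁ w₂ ≫ baerπ i₁ p₁ i₂ p₂ w₁ w₂ = 0} :
    (ShortComplex.mk (baerι i₁ p₁ i₂ p₂ w₁ w₂) (baerπ i₁ p₁ i₂ p₂ w₁ w₂) w).ShortExact := by
  haveI : Mono i₁ := h₁.mono_f
  haveI : Mono i₂ := h₂.mono_f
  haveI : Epi p₁ := h₁.epi_g
  haveI : Epi p₂ := h₂.epi_g
  haveI : Mono (biprod.map i₁ i₂) := inferInstance
  -- the cokernel of `pushout.inl`
  have qCoker := pushoutIsCokernel (biprod.desc (𝟙 A) (𝟙 A)) (biprod.map i₁ i₂)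
    (biprod.map p₁ p₂) (by ext <;> simp [w₁, w₂])
    (biprodIsCokernel h₁.gIsCokernel h₂.gIsCokernel) (by ext <;> simp [w₁, w₂]) (by simp)
  -- `pushout.inl` is the kernel of `q`
  have σKer := Abelian.monoIsKernelOfCokernel _ qCoker
  have ιKer : IsLimit (KernelFork.ofι (baerι i₁ p₁ i₂ p₂ w₁ w₂)
      (show _ ≫ baerπ i₁ p₁ i₂ p₂ w₁ w₂ = 0 by simp [baerι, baerπ])) :=
    pullbackFstIsKernel _ _ _ _ σKer (by simp) (by exact pullback.lift_fst _ _ _)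
  have hmono : Mono (baerι i₁ p₁ i₂ p₂ w₁ w₂) := by
    have : Mono (baerι i₁ p₁ i₂ p₂ w₁ w₂ ≫ pullback.snd _ _) := by
      rw [show baerι i₁ p₁ i₂ p₂ w₁ w₂ ≫ pullback.snd _ _ =
        pushout.inl (biprod.desc (𝟙 A) (𝟙 A)) (biprod.map i₁ i₂) from pullback.lift_snd _ _ _]
      infer_instance
    exact mono_of_mono _ (pullback.snd _ _)
  haveI : Epi (pushout.desc (0 : A ⟶ B ⊞ B) (biprod.map p₁ p₂)
      (show _ ≫ _ = _ by ext <;> simp [w₁, w₂]) :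
      pushout (biprod.desc (𝟙 A) (𝟙 A)) (biprod.map i₁ i₂) ⟶ B ⊞ B) := by
    have : Epi (pushout.inr (biprod.desc (𝟙 A) (𝟙 A)) (biprod.map i₁ i₂) ≫
        pushout.desc (0 : A ⟶ B ⊞ B) (biprod.map p₁ p₂)
        (show _ ≫ _ = _ by ext <;> simp [w₁, w₂])) := by
      rw [pushout.inr_desc]
      infer_instance
    exact epi_of_epi (pushout.inr _ _) _
  have hepi : Epi (baerπ i₁ p₁ i₂ p₂ w₁ w₂) := by
    unfold baerπ baer
    infer_instance
  exact ShortComplex.ShortExact.mk' (ShortComplex.exact_of_f_is_kernel _ ιKer) hmono hepi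

private lemma pushout_inl_eq {A₂ E₁ E₂ : C} (j₁ : A₂ ⟶ E₁) (j₂ : A₂ ⟶ E₂) :
    pushout.inl (biprod.desc (𝟙 A₂) (𝟙 A₂)) (biprod.map j₁ j₂) =
      j₁ ≫ biprod.inl ≫ pushout.inr _ _ := by
  simpa using biprod.inl ≫=
    pushout.condition (f := biprod.desc (𝟙 A₂) (𝟙 A₂)) (g := biprod.map j₁ j₂)

/-- The map on pushouts induced by a morphism of extension data. -/
private noncomputable def pushMap {A B D₁ D₂ A₂ B₂ E₁ E₂ : C}
    (i₁ : A ⟶ D₁) (p₁ : D₁ ⟶ B) (i₂ : A ⟶ D₂) (p₂ : D₂ ⟶ B)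
    (j₁ : A₂ ⟶ E₁) (q₁ : E₁ ⟶ B₂) (j₂ : A₂ ⟶ E₂) (q₂ : E₂ ⟶ B₂)
    (α : A ⟶ A₂) (δ₁ : D₁ ⟶ E₁) (δ₂ : D₂ ⟶ E₂)
    (s₁ : i₁ ≫ δ₁ = α ≫ j₁) (s₂ : i₂ ≫ δ₂ = α ≫ j₂) :
    pushout (biprod.desc (𝟙 A) (𝟙 A)) (biprod.map i₁ i₂) ⟶
      pushout (biprod.desc (𝟙 A₂) (𝟙 A₂)) (biprod.map j₁ j₂) :=
  pushout.desc (α ≫ pushout.inl _ _) (biprod.map δ₁ δ₂ ≫ pushout.inr _ _) (by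
    ext
    · simp [pushout_inl_eq j₁ j₂, reassoc_of% s₁]
    · have h2 : pushout.inl (biprod.desc (𝟙 A₂) (𝟙 A₂)) (biprod.map j₁ j₂) =
          j₂ ≫ biprod.inr ≫ pushout.inr _ _ := by
        simpa using biprod.inr ≫=
          pushout.condition (f := biprod.desc (𝟙 A₂) (𝟙 A₂)) (g := biprod.map j₁ j₂)
      simp [h2, reassoc_of% s₂])

private lemma pushMap_q {A B D₁ D₂ A₂ B₂ E₁ E₂ : C}
    (i₁ : A ⟶ D₁) (p₁ : D₁ ⟶ B) (i₂ : A ⟶ D₂) (p₂ : D₂ ⟶ B)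
    (w₁ : i₁ ≫ p₁ = 0) (w₂ : i₂ ≫ p₂ = 0)
    (j₁ : A₂ ⟶ E₁) (q₁ : E₁ ⟶ B₂) (j₂ : A₂ ⟶ E₂) (q₂ : E₂ ⟶ B₂)
    (v₁ : j₁ ≫ q₁ = 0) (v₂ : j₂ ≫ q₂ = 0)
    (α : A ⟶ A₂) (β : B ⟶ B₂) (δ₁ : D₁ ⟶ E₁) (δ₂ : D₂ ⟶ E₂)
    (s₁ : i₁ ≫ δ₁ = α ≫ j₁) (t₁ : p₁ ≫ β = δ₁ ≫ q₁)
    (s₂ : i₂ ≫ δ₂ = α ≫ j₂) (t₂ : p₂ ≫ β = δ₂ ≫ q₂) :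
    pushMap i₁ p₁ i₂ p₂ j₁ q₁ j₂ q₂ α δ₁ δ₂ s₁ s₂ ≫
        (pushout.desc (0 : A₂ ⟶ B₂ ⊞ B₂) (biprod.map q₁ q₂) (by ext <;> simp [v₁, v₂])) =
      (pushout.desc (0 : A ⟶ B ⊞ B) (biprod.map p₁ p₂) (by ext <;> simp [w₁, w₂])) ≫
        biprod.map β β := by
  apply pushout.hom_ext
  · simp [pushMap]
  · ext <;> simp [pushMap, ← t₁, ← t₂]

/-- Functoriality of the Baer sum. -/
private noncomputable def baerMap {A B D₁ D₂ A₂ B₂ E₁ E₂ : C}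
    (i₁ : A ⟶ D₁) (p₁ : D₁ ⟶ B) (i₂ : A ⟶ D₂) (p₂ : D₂ ⟶ B)
    (w₁ : i₁ ≫ p₁ = 0) (w₂ : i₂ ≫ p₂ = 0)
    (j₁ : A₂ ⟶ E₁) (q₁ : E₁ ⟶ B₂) (j₂ : A₂ ⟶ E₂) (q₂ : E₂ ⟶ B₂)
    (v₁ : j₁ ≫ q₁ = 0) (v₂ : j₂ ≫ q₂ = 0)
    (α : A ⟶ A₂) (β : B ⟶ B₂) (δ₁ : D₁ ⟶ E₁) (δ₂ : D₂ ⟶ E₂)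
    (s₁ : i₁ ≫ δ₁ = α ≫ j₁) (t₁ : p₁ ≫ β = δ₁ ≫ q₁)
    (s₂ : i₂ ≫ δ₂ = α ≫ j₂) (t₂ : p₂ ≫ β = δ₂ ≫ q₂) :
    baer i₁ p₁ i₂ p₂ w₁ w₂ ⟶ baer j₁ q₁ j₂ q₂ v₁ v₂ :=
  pullback.lift (pullback.fst _ _ ≫ β)
    (pullback.snd _ _ ≫ pushMap i₁ p₁ i₂ p₂ j₁ q₁ j₂ q₂ α δ₁ δ₂ s₁ s₂) (by
      erw [Category.assoc, Category.assoc, pushMap_q i₁ p₁ i₂ p₂ w₁ w₂ j₁ q₁ j₂ q₂ v₁ v₂ α β δ₁ δ₂ s₁ t₁ s₂ t₂,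
        ← pullback.condition_assoc]
      unfold baer
      ext <;> simp)

private lemma baerMap_π {A B D₁ D₂ A₂ B₂ E₁ E₂ : C}
    (i₁ : A ⟶ D₁) (p₁ : D₁ ⟶ B) (i₂ : A ⟶ D₂) (p₂ : D₂ ⟶ B)
    (w₁ : i₁ ≫ p₁ = 0) (w₂ : i₂ ≫ p₂ = 0)
    (j₁ : A₂ ⟶ E₁) (q₁ : E₁ ⟶ B₂) (j₂ : A₂ ⟶ E₂) (q₂ : E₂ ⟶ B₂)
    (v₁ : j₁ ≫ q₁ = 0) (v₂ : j₂ ≫ q₂ = 0)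
    (α : A ⟶ A₂) (β : B ⟶ B₂) (δ₁ : D₁ ⟶ E₁) (δ₂ : D₂ ⟶ E₂)
    (s₁ : i₁ ≫ δ₁ = α ≫ j₁) (t₁ : p₁ ≫ β = δ₁ ≫ q₁)
    (s₂ : i₂ ≫ δ₂ = α ≫ j₂) (t₂ : p₂ ≫ β = δ₂ ≫ q₂) :
    baerMap i₁ p₁ i₂ p₂ w₁ w₂ j₁ q₁ j₂ q₂ v₁ v₂ α β δ₁ δ₂ s₁ t₁ s₂ t₂ ≫
        baerπ j₁ q₁ j₂ q₂ v₁ v₂ = baerπ i₁ p₁ i₂ p₂ w₁ w₂ ≫ β := by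
  simp [baerMap, baerπ]

private lemma baerMap_snd {A B D₁ D₂ A₂ B₂ E₁ E₂ : C}
    (i₁ : A ⟶ D₁) (p₁ : D₁ ⟶ B) (i₂ : A ⟶ D₂) (p₂ : D₂ ⟶ B)
    (w₁ : i₁ ≫ p₁ = 0) (w₂ : i₂ ≫ p₂ = 0)
    (j₁ : A₂ ⟶ E₁) (q₁ : E₁ ⟶ B₂) (j₂ : A₂ ⟶ E₂) (q₂ : E₂ ⟶ B₂)
    (v₁ : j₁ ≫ q₁ = 0) (v₂ : j₂ ≫ q₂ = 0)
    (α : A ⟶ A₂) (β : B ⟶ B₂) (δ₁ : D₁ ⟶ E₁) (δ₂ : D₂ ⟶ E₂)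
    (s₁ : i₁ ≫ δ₁ = α ≫ j₁) (t₁ : p₁ ≫ β = δ₁ ≫ q₁)
    (s₂ : i₂ ≫ δ₂ = α ≫ j₂) (t₂ : p₂ ≫ β = δ₂ ≫ q₂) :
    baerMap i₁ p₁ i₂ p₂ w₁ w₂ j₁ q₁ j₂ q₂ v₁ v₂ α β δ₁ δ₂ s₁ t₁ s₂ t₂ ≫ baerSnd j₁ q₁ j₂ q₂ v₁ v₂ =
      baerSnd i₁ p₁ i₂ p₂ w₁ w₂ ≫ pushMap i₁ p₁ i₂ p₂ j₁ q₁ j₂ q₂ α δ₁ δ₂ s₁ s₂ :=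
  pullback.lift_snd _ _ _

private lemma baerMap_π_assoc {A B D₁ D₂ A₂ B₂ E₁ E₂ Z : C}
    (i₁ : A ⟶ D₁) (p₁ : D₁ ⟶ B) (i₂ : A ⟶ D₂) (p₂ : D₂ ⟶ B)
    (w₁ : i₁ ≫ p₁ = 0) (w₂ : i₂ ≫ p₂ = 0)
    (j₁ : A₂ ⟶ E₁) (q₁ : E₁ ⟶ B₂) (j₂ : A₂ ⟶ E₂) (q₂ : E₂ ⟶ B₂)
    (v₁ : j₁ ≫ q₁ = 0) (v₂ : j₂ ≫ q₂ = 0)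
    (α : A ⟶ A₂) (β : B ⟶ B₂) (δ₁ : D₁ ⟶ E₁) (δ₂ : D₂ ⟶ E₂)
    (s₁ : i₁ ≫ δ₁ = α ≫ j₁) (t₁ : p₁ ≫ β = δ₁ ≫ q₁)
    (s₂ : i₂ ≫ δ₂ = α ≫ j₂) (t₂ : p₂ ≫ β = δ₂ ≫ q₂) (z : B₂ ⟶ Z) :
    baerMap i₁ p₁ i₂ p₂ w₁ w₂ j₁ q₁ j₂ q₂ v₁ v₂ α β δ₁ δ₂ s₁ t₁ s₂ t₂ ≫ baerπ j₁ q₁ j₂ q₂ v₁ v₂ ≫ z = baerπ i₁ p₁ i₂ p₂ w₁ w₂ ≫ β ≫ z := by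
  rw [← Category.assoc, baerMap_π, Category.assoc]

private lemma baerMap_snd_assoc {A B D₁ D₂ A₂ B₂ E₁ E₂ Z : C}
    (i₁ : A ⟶ D₁) (p₁ : D₁ ⟶ B) (i₂ : A ⟶ D₂) (p₂ : D₂ ⟶ B)
    (w₁ : i₁ ≫ p₁ = 0) (w₂ : i₂ ≫ p₂ = 0)
    (j₁ : A₂ ⟶ E₁) (q₁ : E₁ ⟶ B₂) (j₂ : A₂ ⟶ E₂) (q₂ : E₂ ⟶ B₂)
    (v₁ : j₁ ≫ q₁ = 0) (v₂ : j₂ ≫ q₂ = 0)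
    (α : A ⟶ A₂) (β : B ⟶ B₂) (δ₁ : D₁ ⟶ E₁) (δ₂ : D₂ ⟶ E₂)
    (s₁ : i₁ ≫ δ₁ = α ≫ j₁) (t₁ : p₁ ≫ β = δ₁ ≫ q₁)
    (s₂ : i₂ ≫ δ₂ = α ≫ j₂) (t₂ : p₂ ≫ β = δ₂ ≫ q₂)
    (z : pushout (biprod.desc (𝟙 A₂) (𝟙 A₂)) (biprod.map j₁ j₂) ⟶ Z) :
    baerMap i₁ p₁ i₂ p₂ w₁ w₂ j₁ q₁ j₂ q₂ v₁ v₂ α β δ₁ δ₂ s₁ t₁ s₂ t₂ ≫ baerSnd j₁ q₁ j₂ q₂ v₁ v₂ ≫ z =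
      baerSnd i₁ p₁ i₂ p₂ w₁ w₂ ≫ pushMap i₁ p₁ i₂ p₂ j₁ q₁ j₂ q₂ α δ₁ δ₂ s₁ s₂ ≫ z := by
  rw [← Category.assoc, baerMap_snd, Category.assoc]

private lemma baerι_fst {A B D₁ D₂ : C} (i₁ : A ⟶ D₁) (p₁ : D₁ ⟶ B) (i₂ : A ⟶ D₂)
    (p₂ : D₂ ⟶ B) (w₁ : i₁ ≫ p₁ = 0) (w₂ : i₂ ≫ p₂ = 0) :
    baerι i₁ p₁ i₂ p₂ w₁ w₂ ≫ baerπ i₁ p₁ i₂ p₂ w₁ w₂ = 0 :=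
  pullback.lift_fst _ _ _

private lemma baerι_snd {A B D₁ D₂ : C} (i₁ : A ⟶ D₁) (p₁ : D₁ ⟶ B) (i₂ : A ⟶ D₂)
    (p₂ : D₂ ⟶ B) (w₁ : i₁ ≫ p₁ = 0) (w₂ : i₂ ≫ p₂ = 0) :
    baerι i₁ p₁ i₂ p₂ w₁ w₂ ≫ baerSnd i₁ p₁ i₂ p₂ w₁ w₂ =
      pushout.inl (biprod.desc (𝟙 A) (𝟙 A)) (biprod.map i₁ i₂) :=
  pullback.lift_snd _ _ _

private lemma baerι_baerMap {A B D₁ D₂ A₂ B₂ E₁ E₂ : C}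
    (i₁ : A ⟶ D₁) (p₁ : D₁ ⟶ B) (i₂ : A ⟶ D₂) (p₂ : D₂ ⟶ B)
    (w₁ : i₁ ≫ p₁ = 0) (w₂ : i₂ ≫ p₂ = 0)
    (j₁ : A₂ ⟶ E₁) (q₁ : E₁ ⟶ B₂) (j₂ : A₂ ⟶ E₂) (q₂ : E₂ ⟶ B₂)
    (v₁ : j₁ ≫ q₁ = 0) (v₂ : j₂ ≫ q₂ = 0)
    (α : A ⟶ A₂) (β : B ⟶ B₂) (δ₁ : D₁ ⟶ E₁) (δ₂ : D₂ ⟶ E₂)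
    (s₁ : i₁ ≫ δ₁ = α ≫ j₁) (t₁ : p₁ ≫ β = δ₁ ≫ q₁)
    (s₂ : i₂ ≫ δ₂ = α ≫ j₂) (t₂ : p₂ ≫ β = δ₂ ≫ q₂) :
    baerι i₁ p₁ i₂ p₂ w₁ w₂ ≫
        baerMap i₁ p₁ i₂ p₂ w₁ w₂ j₁ q₁ j₂ q₂ v₁ v₂ α β δ₁ δ₂ s₁ t₁ s₂ t₂ =
      α ≫ baerι j₁ q₁ j₂ q₂ v₁ v₂ := by
  apply baer_hom_ext
  · simp [baerMap_π_assoc, baerMap_π, reassoc_of% baerι_fst, baerι_fst]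
  · simp [baerMap_snd_assoc, baerMap_snd, reassoc_of% baerι_snd, baerι_snd, pushMap]

/-- In an abelian category, suppose given two extensions
`0 → A → Dₜ → B → 0` (`t = 1,2`) together with compatible short exact sequences
`0 → A' → A → A'' → 0`, `0 → B' → B → B'' → 0` and `0 → Dₜ' → Dₜ → Dₜ'' → 0` fitting
into 3×3 commutative diagrams with exact rows and columns, in which `Dₜ'` is an
extension of `B'` by `A'` and `Dₜ''` an extension of `B''` by `A''`.  If moreover each
column splits (admits a retraction), then the Baer sums fit into a short exact sequence
`0 → (D₁' + D₂') → (D₁ + D₂) → (D₁'' + D₂'') → 0`, via maps compatible with the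
canonical inclusions from `A', A, A''` and projections to `B', B, B''`. -/
theorem stmt8 {A' A A'' B' B B'' D₁' D₁ D₁'' D₂' D₂ D₂'' : C}
    -- rows (extensions), for t = 1, 2 and each of the three levels
    (ia₁' : A' ⟶ D₁') (pb₁' : D₁' ⟶ B') (ia₁ : A ⟶ D₁) (pb₁ : D₁ ⟶ B)
    (ia₁'' : A'' ⟶ D₁'') (pb₁'' : D₁'' ⟶ B'')
    (ia₂' : A' ⟶ D₂') (pb₂' : D₂' ⟶ B') (ia₂ : A ⟶ D₂) (pb₂ : D₂ ⟶ B)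
    (ia₂'' : A'' ⟶ D₂'') (pb₂'' : D₂'' ⟶ B'')
    (w₁' : ia₁' ≫ pb₁' = 0) (w₁ : ia₁ ≫ pb₁ = 0) (w₁'' : ia₁'' ≫ pb₁'' = 0)
    (w₂' : ia₂' ≫ pb₂' = 0) (w₂ : ia₂ ≫ pb₂ = 0) (w₂'' : ia₂'' ≫ pb₂'' = 0)
    (he₁' : (ShortComplex.mk ia₁' pb₁' w₁').ShortExact)
    (he₁ : (ShortComplex.mk ia₁ pb₁ w₁).ShortExact)
    (he₁'' : (ShortComplex.mk ia₁'' pb₁'' w₁'').ShortExact)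
    (he₂' : (ShortComplex.mk ia₂' pb₂' w₂').ShortExact)
    (he₂ : (ShortComplex.mk ia₂ pb₂ w₂).ShortExact)
    (he₂'' : (ShortComplex.mk ia₂'' pb₂'' w₂'').ShortExact)
    -- columns
    (aA : A' ⟶ A) (aA' : A ⟶ A'') (bB : B' ⟶ B) (bB' : B ⟶ B'')
    (d₁ : D₁' ⟶ D₁) (d₁' : D₁ ⟶ D₁'') (d₂ : D₂' ⟶ D₂) (d₂' : D₂ ⟶ D₂'')
    (wA : aA ≫ aA' = 0) (wB : bB ≫ bB' = 0) (wD₁ : d₁ ≫ d₁' = 0) (wD₂ : d₂ ≫ d₂' = 0)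
    (hcA : (ShortComplex.mk aA aA' wA).ShortExact)
    (hcB : (ShortComplex.mk bB bB' wB).ShortExact)
    (hcD₁ : (ShortComplex.mk d₁ d₁' wD₁).ShortExact)
    (hcD₂ : (ShortComplex.mk d₂ d₂' wD₂).ShortExact)
    -- the columns split
    (hsA : ∃ r : A ⟶ A', aA ≫ r = 𝟙 A') (hsB : ∃ r : B ⟶ B', bB ≫ r = 𝟙 B')
    (hsD₁ : ∃ r : D₁ ⟶ D₁', d₁ ≫ r = 𝟙 D₁') (hsD₂ : ∃ r : D₂ ⟶ D₂', d₂ ≫ r = 𝟙 D₂')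
    -- commutativity of the 3×3 diagrams
    (sq₁a : ia₁' ≫ d₁ = aA ≫ ia₁) (sq₁b : pb₁' ≫ bB = d₁ ≫ pb₁)
    (sq₁c : aA' ≫ ia₁'' = ia₁ ≫ d₁') (sq₁d : pb₁ ≫ bB' = d₁' ≫ pb₁'')
    (sq₂a : ia₂' ≫ d₂ = aA ≫ ia₂) (sq₂b : pb₂' ≫ bB = d₂ ≫ pb₂)
    (sq₂c : aA' ≫ ia₂'' = ia₂ ≫ d₂') (sq₂d : pb₂ ≫ bB' = d₂' ≫ pb₂'') :
    ∃ (f : baer ia₁' pb₁' ia₂' pb₂' w₁' w₂' ⟶ baer ia₁ pb₁ ia₂ pb₂ w₁ w₂)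
      (g : baer ia₁ pb₁ ia₂ pb₂ w₁ w₂ ⟶ baer ia₁'' pb₁'' ia₂'' pb₂'' w₁'' w₂'')
      (wfg : f ≫ g = 0),
      (ShortComplex.mk f g wfg).ShortExact ∧
      baerι ia₁' pb₁' ia₂' pb₂' w₁' w₂' ≫ f = aA ≫ baerι ia₁ pb₁ ia₂ pb₂ w₁ w₂ ∧
      f ≫ baerπ ia₁ pb₁ ia₂ pb₂ w₁ w₂ = baerπ ia₁' pb₁' ia₂' pb₂' w₁' w₂' ≫ bB ∧
      baerι ia₁ pb₁ ia₂ pb₂ w₁ w₂ ≫ g = aA' ≫ baerι ia₁'' pb₁'' ia₂'' pb₂'' w₁'' w₂'' ∧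
      g ≫ baerπ ia₁'' pb₁'' ia₂'' pb₂'' w₁'' w₂'' = baerπ ia₁ pb₁ ia₂ pb₂ w₁ w₂ ≫ bB' := by
  classical
  set f := baerMap ia₁' pb₁' ia₂' pb₂' w₁' w₂' ia₁ pb₁ ia₂ pb₂ w₁ w₂ aA bB d₁ d₂
    sq₁a sq₁b sq₂a sq₂b with hf
  set g := baerMap ia₁ pb₁ ia₂ pb₂ w₁ w₂ ia₁'' pb₁'' ia₂'' pb₂'' w₁'' w₂'' aA' bB' d₁' d₂'
    sq₁c.symm sq₁d sq₂c.symm sq₂d with hg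
  have hP : pushMap ia₁' pb₁' ia₂' pb₂' ia₁ pb₁ ia₂ pb₂ aA d₁ d₂ sq₁a sq₂a ≫
      pushMap ia₁ pb₁ ia₂ pb₂ ia₁'' pb₁'' ia₂'' pb₂'' aA' d₁' d₂' sq₁c.symm sq₂c.symm = 0 := by
    apply pushout.hom_ext
    · simp [pushMap, reassoc_of% wA, wA]
    · simp only [pushMap, Category.assoc, pushout.inr_desc_assoc, pushout.inr_desc, comp_zero]
      rw [← Category.assoc,
        show biprod.map d₁ d₂ ≫ biprod.map d₁' d₂' = 0 by ext <;> simp [wD₁, wD₂]]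
      simp
  have wfg : f ≫ g = 0 := by
    apply baer_hom_ext
    · simp [hf, hg, baerMap_π_assoc, baerMap_π, reassoc_of% wB, wB]
    · simp [hf, hg, baerMap_snd_assoc, baerMap_snd, reassoc_of% hP, hP]
  refine ⟨f, g, wfg, ?_, ?_, ?_, ?_, ?_⟩
  · -- short exactness via the nine lemma
    have hR' := baer_shortExact he₁' he₂'
      (w := by simp [baerι, baerπ])
    have hR := baer_shortExact he₁ he₂
      (w := by simp [baerι, baerπ])
    have hR'' := baer_shortExact he₁'' he₂''
      (w := by simp [baerι, baerπ])
    let φ : ShortComplex.mk _ _ (by simp [baerι, baerπ] :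
          baerι ia₁' pb₁' ia₂' pb₂' w₁' w₂' ≫ baerπ ia₁' pb₁' ia₂' pb₂' w₁' w₂' = 0) ⟶
        ShortComplex.mk _ _ (by simp [baerι, baerπ] :
          baerι ia₁ pb₁ ia₂ pb₂ w₁ w₂ ≫ baerπ ia₁ pb₁ ia₂ pb₂ w₁ w₂ = 0) :=
      { τ₁ := aA
        τ₂ := f
        τ₃ := bB
        comm₁₂ := (baerι_baerMap ia₁' pb₁' ia₂' pb₂' w₁' w₂' ia₁ pb₁ ia₂ pb₂ w₁ w₂ aA bB d₁ d₂
          sq₁a sq₁b sq₂a sq₂b).symm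
        comm₂₃ := baerMap_π ia₁' pb₁' ia₂' pb₂' w₁' w₂' ia₁ pb₁ ia₂ pb₂ w₁ w₂ aA bB d₁ d₂
          sq₁a sq₁b sq₂a sq₂b }
    let ψ : ShortComplex.mk _ _ (by simp [baerι, baerπ] :
          baerι ia₁ pb₁ ia₂ pb₂ w₁ w₂ ≫ baerπ ia₁ pb₁ ia₂ pb₂ w₁ w₂ = 0) ⟶
        ShortComplex.mk _ _ (by simp [baerι, baerπ] :
          baerι ia₁'' pb₁'' ia₂'' pb₂'' w₁'' w₂'' ≫ baerπ ia₁'' pb₁'' ia₂'' pb₂'' w₁'' w₂'' = 0) :=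
      { τ₁ := aA'
        τ₂ := g
        τ₃ := bB'
        comm₁₂ := (baerι_baerMap ia₁ pb₁ ia₂ pb₂ w₁ w₂ ia₁'' pb₁'' ia₂'' pb₂'' w₁'' w₂''
          aA' bB' d₁' d₂' sq₁c.symm sq₁d sq₂c.symm sq₂d).symm
        comm₂₃ := baerMap_π ia₁ pb₁ ia₂ pb₂ w₁ w₂ ia₁'' pb₁'' ia₂'' pb₂'' w₁'' w₂''
          aA' bB' d₁' d₂' sq₁c.symm sq₁d sq₂c.symm sq₂d }
    have wφψ : φ ≫ ψ = 0 := ShortComplex.hom_ext _ _ wA wfg wB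
    exact nineLemmaMiddle hR' hR hR'' φ ψ wφψ hcA hcB (w₂ := wfg)
  · exact baerι_baerMap ia₁' pb₁' ia₂' pb₂' w₁' w₂' ia₁ pb₁ ia₂ pb₂ w₁ w₂ aA bB d₁ d₂
      sq₁a sq₁b sq₂a sq₂b
  · exact baerMap_π ia₁' pb₁' ia₂' pb₂' w₁' w₂' ia₁ pb₁ ia₂ pb₂ w₁ w₂ aA bB d₁ d₂
      sq₁a sq₁b sq₂a sq₂b
  · exact baerι_baerMap ia₁ pb₁ ia₂ pb₂ w₁ w₂ ia₁'' pb₁'' ia₂'' pb₂'' w₁'' w₂'' aA' bB' d₁' d₂'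
      sq₁c.symm sq₁d sq₂c.symm sq₂d
  · exact baerMap_π ia₁ pb₁ ia₂ pb₂ w₁ w₂ ia₁'' pb₁'' ia₂'' pb₂'' w₁'' w₂'' aA' bB' d₁' d₂'
      sq₁c.symm sq₁d sq₂c.symm sq₂d
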